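/- For every probability vector ν on {1,…,B} and every t ∈ ℕ, ‖ν P_d^t − π_d‖_TV ≤ ( 1 − ρ Σ_{ℓ=1}^B L(ℓ) / (B·max_{ℓ ∈ {1,…,B}} L(ℓ)) )^t, where π_d(j) = L(j)/Σ_{ℓ=1}^B L(ℓ). -/

import Mathlib

open Finset

/-- geometric total-variation convergence of the graph-enabled discretized MCMC:
`‖ν P_d^t − π_d‖_TV ≤ (1 − ρ Σ L/(B·max L))^t` for every initial probability vector `ν`. -/
theorem stmt_8
    (B : ℕ) (hB : 1 ≤ B)
    (E : Fin B → Fin B → Prop) [DecidableRel E]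
    (hEsymm : ∀ i j, E i j → E j i) (hEirr : ∀ i, ¬ E i i)
    (D : Fin B → ℕ)
    (hD : ∀ i, D i = (Finset.univ.filter (fun j => E i j)).card)
    (hD1 : ∀ i, 1 ≤ D i)
    (ρ : ℝ) (hρ0 : 0 < ρ) (hρ1 : ρ < 1)
    (q : Fin B → Fin B → ℝ)
    (hq : ∀ i j, q i j = ρ / B + (1 - ρ) * (if E i j then (1 : ℝ) else 0) / (D i))
    (L : Fin B → ℝ) (hL : ∀ i, 0 < L i)
    (P : Fin B → Fin B → ℝ)
    (hPoff : ∀ i j, i ≠ j → P i j = q i j * min (q j i * L j / (q i j * L i)) 1)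
    (hPdiag : ∀ i, P i i = 1 - ∑ j ∈ Finset.univ.erase i, P i j)
    (πd : Fin B → ℝ) (hπd : ∀ j, πd j = L j / ∑ ℓ, L ℓ)
    (ν : Fin B → ℝ) (hνnonneg : ∀ i, 0 ≤ ν i) (hνsum : ∑ i, ν i = 1)
    -- `νt t` is the distribution of the chain at time `t` started from `ν`
    (νt : ℕ → Fin B → ℝ)
    (hν0 : νt 0 = ν)
    (hνrec : ∀ t j, νt (t + 1) j = ∑ i, νt t i * P i j) :
    ∀ (t : ℕ) (A : Finset (Fin B)),
      |∑ j ∈ A, νt t j - ∑ j ∈ A, πd j| ≤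
        (1 - ρ * (∑ ℓ, L ℓ) /
          (B * Finset.univ.sup' ⟨⟨0, hB⟩, Finset.mem_univ _⟩ L)) ^ t := by
  have hBpos : (0:ℝ) < B := by exact_mod_cast hB
  set M : ℝ := Finset.univ.sup' ⟨⟨0, hB⟩, Finset.mem_univ _⟩ L with hM
  have hLM : ∀ i, L i ≤ M := fun i => Finset.le_sup' L (Finset.mem_univ i)
  have hMpos : 0 < M := lt_of_lt_of_le (hL ⟨0, hB⟩) (hLM ⟨0, hB⟩)
  set S : ℝ := ∑ ℓ, L ℓ with hS
  have hSpos : 0 < S := Finset.sum_pos (fun i _ => hL i) ⟨⟨0, hB⟩, Finset.mem_univ _⟩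
  set ε : ℝ := ρ * S / (B * M) with hε
  have hSle : S ≤ B * M := by
    calc S ≤ ∑ _ℓ : Fin B, M := Finset.sum_le_sum (fun i _ => hLM i)
    _ = B * M := by rw [Finset.sum_const, Finset.card_univ, Fintype.card_fin, nsmul_eq_mul]
  have hεpos : 0 < ε := by positivity
  have hεle : ε < 1 := by
    have : ε ≤ ρ := by
      rw [hε, div_le_iff₀ (by positivity)]
      nlinarith
    linarith
  set δ : ℝ := 1 - ε with hδ
  have hδ0 : 0 ≤ δ := by linarith
  -- basic facts about q
  have hqlb : ∀ i j, ρ / B ≤ q i j := by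
    intro i j
    rw [hq]
    have hDpos : (0:ℝ) < D i := by exact_mod_cast hD1 i
    have : 0 ≤ (1 - ρ) * (if E i j then (1 : ℝ) else 0) / (D i) := by
      apply div_nonneg _ (le_of_lt hDpos)
      apply mul_nonneg (by linarith)
      split <;> norm_num
    linarith
  have hqpos : ∀ i j, 0 < q i j := fun i j => lt_of_lt_of_le (by positivity) (hqlb i j)
  have hqrow : ∀ i, ∑ j, q i j = 1 := by
    intro i
    have hDpos : (D i : ℝ) ≠ 0 := by
      exact_mod_cast Nat.one_le_iff_ne_zero.mp (hD1 i)
    have hBne : (B:ℝ) ≠ 0 := ne_of_gt hBpos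
    simp only [hq]
    rw [Finset.sum_add_distrib]
    have h1 : ∑ _j : Fin B, ρ / B = ρ := by
      rw [Finset.sum_const, Finset.card_univ, Fintype.card_fin, nsmul_eq_mul,
        ← mul_div_assoc, mul_comm, mul_div_assoc, div_self hBne, mul_one]
    have h2 : ∑ j, (1 - ρ) * (if E i j then (1:ℝ) else 0) / (D i) = 1 - ρ := by
      rw [← Finset.sum_div, ← Finset.mul_sum]
      have : ∑ j, (if E i j then (1:ℝ) else 0) = (D i : ℝ) := by
        rw [Finset.sum_boole, hD i]
      rw [this, mul_div_assoc, div_self hDpos, mul_one]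
    rw [h1, h2]; ring
  -- P off-diagonal: explicit min formula
  have hPmin : ∀ i j, i ≠ j → P i j = min (q j i * L j / L i) (q i j) := by
    intro i j hij
    rw [hPoff i j hij, mul_min_of_nonneg _ _ (le_of_lt (hqpos i j)), mul_one]
    congr 1
    rw [← mul_div_assoc, div_eq_div_iff (mul_pos (hqpos i j) (hL i)).ne' (hL i).ne']
    ring
  have hPoffle : ∀ i j, i ≠ j → P i j ≤ q i j := by
    intro i j hij; rw [hPmin i j hij]; exact min_le_right _ _
  have hPoffnn : ∀ i j, i ≠ j → 0 ≤ P i j := by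
    intro i j hij; rw [hPmin i j hij]
    apply le_min
    · exact div_nonneg (mul_nonneg (hqpos j i).le (hL j).le) (hL i).le
    · exact le_of_lt (hqpos i j)
  have hqerase : ∀ i, ∑ j ∈ Finset.univ.erase i, q i j = 1 - q i i := by
    intro i
    have := Finset.sum_erase_add Finset.univ (q i) (Finset.mem_univ i)
    rw [hqrow i] at this
    linarith
  have hPeraseq : ∀ i, ∑ j ∈ Finset.univ.erase i, P i j ≤ 1 - q i i := by
    intro i
    rw [← hqerase i]
    apply Finset.sum_le_sum
    intro j hj
    exact hPoffle i j (fun h => (Finset.mem_erase.mp hj).1 h.symm)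
  have hqii : ∀ i, q i i = ρ / B := by
    intro i
    rw [hq]
    simp [hEirr i]
  have hPdiaglb : ∀ i, ρ / B ≤ P i i := by
    intro i
    rw [hPdiag i]
    have := hPeraseq i
    rw [hqii i] at this
    linarith
  have hProw : ∀ i, ∑ j, P i j = 1 := by
    intro i
    rw [← Finset.sum_erase_add Finset.univ (P i) (Finset.mem_univ i), hPdiag i]
    ring
  have hPnn : ∀ i j, 0 ≤ P i j := by
    intro i j
    by_cases hij : i = j
    · subst hij
      calc (0:ℝ) ≤ ρ / B := by positivity
      _ ≤ P i i := hPdiaglb i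
    · exact hPoffnn i j hij
  -- Doeblin lower bound
  have hgen : ∀ x : Fin B, ρ / (B * M) * L x ≤ ρ / B := by
    intro x
    rw [div_mul_eq_mul_div, div_le_div_iff₀ (mul_pos hBpos hMpos) hBpos]
    have := mul_le_mul_of_nonneg_left (hLM x) (le_of_lt (mul_pos hρ0 hBpos))
    nlinarith [this]
  have hPlb : ∀ i j, ρ / (B * M) * L j ≤ P i j := by
    intro i j
    by_cases hij : i = j
    · subst hij
      exact le_trans (hgen i) (hPdiaglb i)
    · rw [hPmin i j hij]
      apply le_min
      · rw [div_mul_eq_mul_div, div_le_div_iff₀ (mul_pos hBpos hMpos) (hL i)]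
        have h : ρ ≤ q j i * B := (div_le_iff₀ hBpos).mp (hqlb j i)
        have h1 : ρ * (L j * L i) ≤ (q j i * B) * (L j * L i) :=
          mul_le_mul_of_nonneg_right h (mul_pos (hL j) (hL i)).le
        have h2 : (q j i * B * L j) * L i ≤ (q j i * B * L j) * M :=
          mul_le_mul_of_nonneg_left (hLM i)
            (le_of_lt (mul_pos (mul_pos (hqpos j i) hBpos) (hL j)))
        nlinarith [h1, h2]
      · exact le_trans (hgen j) (hqlb i j)
  -- detailed balance
  have hdb : ∀ i j, L i * P i j = L j * P j i := by
    intro i j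
    by_cases hij : i = j
    · subst hij; rfl
    · rw [hPmin i j hij, hPmin j i (Ne.symm hij),
        mul_min_of_nonneg _ _ (le_of_lt (hL i)), mul_min_of_nonneg _ _ (le_of_lt (hL j))]
      have e1 : L i * (q j i * L j / L i) = q j i * L j := by
        rw [mul_comm, div_mul_cancel₀ _ (hL i).ne']
      have e2 : L j * (q i j * L i / L j) = q i j * L i := by
        rw [mul_comm, div_mul_cancel₀ _ (hL j).ne']
      rw [e1, e2, min_comm]
      congr 1 <;> ring
  have hπdsum : ∑ j, πd j = 1 := by
    simp only [hπd]
    rw [← Finset.sum_div, ← hS]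
    field_simp
  have hstat : ∀ j, ∑ i, πd i * P i j = πd j := by
    intro j
    have : ∀ i, πd i * P i j = πd j * P j i := by
      intro i
      rw [hπd, hπd, div_mul_eq_mul_div, div_mul_eq_mul_div, hdb i j]
    calc ∑ i, πd i * P i j = ∑ i, πd j * P j i := by
          exact Finset.sum_congr rfl (fun i _ => this i)
    _ = πd j * ∑ i, P j i := by rw [Finset.mul_sum]
    _ = πd j := by rw [hProw j, mul_one]
  have hνtsum : ∀ t, ∑ i, νt t i = 1 := by
    intro t
    induction t with
    | zero => rw [hν0]; exact hνsum
    | succ t ih =>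
      calc ∑ j, νt (t+1) j = ∑ j, ∑ i, νt t i * P i j := by
            exact Finset.sum_congr rfl (fun j _ => hνrec t j)
      _ = ∑ i, ∑ j, νt t i * P i j := Finset.sum_comm
      _ = ∑ i, νt t i * 1 := by
            exact Finset.sum_congr rfl (fun i _ => by rw [← Finset.mul_sum, hProw i])
      _ = 1 := by simp [ih]
  -- the signed measure μ
  set μ : ℕ → Fin B → ℝ := fun t j => νt t j - πd j with hμ
  have hμsum : ∀ t, ∑ j, μ t j = 0 := by
    intro t
    simp only [hμ, Finset.sum_sub_distrib, hνtsum t, hπdsum, sub_self]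
  have hμrec : ∀ t j, μ (t+1) j = ∑ i, μ t i * P i j := by
    intro t j
    simp only [hμ, sub_mul, Finset.sum_sub_distrib]
    rw [← hνrec t j, hstat j]
  have hεπd : ∀ j, ε * πd j = ρ / (B * M) * L j := by
    intro j
    have hne2 : (B:ℝ) * M ≠ 0 := (mul_pos hBpos hMpos).ne'
    rw [hπd, hε, div_mul_div_comm, div_mul_eq_mul_div,
      div_eq_div_iff (mul_ne_zero hne2 hSpos.ne') hne2]
    ring
  have hPεnn : ∀ i j, 0 ≤ P i j - ε * πd j := by
    intro i j
    rw [hεπd j]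
    linarith [hPlb i j]
  -- contraction
  have hcontr : ∀ t, ∑ j, |μ (t+1) j| ≤ δ * ∑ j, |μ t j| := by
    intro t
    have key : ∀ j, μ (t+1) j = ∑ i, μ t i * (P i j - ε * πd j) := by
      intro j
      simp only [mul_sub, Finset.sum_sub_distrib, ← Finset.sum_mul, hμsum t,
        zero_mul, sub_zero]
      exact hμrec t j
    calc ∑ j, |μ (t+1) j| ≤ ∑ j, ∑ i, |μ t i| * (P i j - ε * πd j) := by
          apply Finset.sum_le_sum
          intro j _
          rw [key j]
          refine le_trans (Finset.abs_sum_le_sum_abs _ _) ?_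
          apply Finset.sum_le_sum
          intro i _
          rw [abs_mul, abs_of_nonneg (hPεnn i j)]
    _ = ∑ i, |μ t i| * ∑ j, (P i j - ε * πd j) := by
          rw [Finset.sum_comm]
          exact Finset.sum_congr rfl (fun i _ => by rw [Finset.mul_sum])
    _ = ∑ i, |μ t i| * δ := by
          apply Finset.sum_congr rfl
          intro i _
          congr 1
          rw [Finset.sum_sub_distrib, hProw i, ← Finset.mul_sum, hπdsum, mul_one]
    _ = δ * ∑ j, |μ t j| := by rw [← Finset.sum_mul]; ring
  have hbound : ∀ t, ∑ j, |μ t j| ≤ 2 * δ ^ t := by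
    intro t
    induction t with
    | zero =>
      simp only [pow_zero, mul_one]
      calc ∑ j, |μ 0 j| ≤ ∑ j, (ν j + πd j) := by
            apply Finset.sum_le_sum
            intro j _
            simp only [hμ, hν0]
            have h1 : 0 ≤ πd j := by
              rw [hπd]; exact div_nonneg (hL j).le hSpos.le
            rw [abs_sub_le_iff]
            constructor <;> [linarith [hνnonneg j]; linarith [hνnonneg j]]
      _ = 2 := by rw [Finset.sum_add_distrib, hνsum, hπdsum]; norm_num
    | succ t ih =>
      calc ∑ j, |μ (t+1) j| ≤ δ * ∑ j, |μ t j| := hcontr t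
      _ ≤ δ * (2 * δ ^ t) := mul_le_mul_of_nonneg_left ih hδ0
      _ = 2 * δ ^ (t+1) := by ring
  intro t A
  have hsplit : ∑ j ∈ A, μ t j + ∑ j ∈ Finset.univ \ A, μ t j = 0 := by
    rw [add_comm, Finset.sum_sdiff_eq_sub (Finset.subset_univ A), hμsum t]
    ring
  have h1 : |∑ j ∈ A, μ t j| + |∑ j ∈ Finset.univ \ A, μ t j| ≤ ∑ j, |μ t j| := by
    calc |∑ j ∈ A, μ t j| + |∑ j ∈ Finset.univ \ A, μ t j|
        ≤ (∑ j ∈ A, |μ t j|) + ∑ j ∈ Finset.univ \ A, |μ t j| :=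
          add_le_add (Finset.abs_sum_le_sum_abs _ _) (Finset.abs_sum_le_sum_abs _ _)
    _ = ∑ j, |μ t j| := by
          rw [add_comm, Finset.sum_sdiff_eq_sub (Finset.subset_univ A)]
          ring
  have h2 : |∑ j ∈ A, μ t j| = |∑ j ∈ Finset.univ \ A, μ t j| := by
    have : ∑ j ∈ Finset.univ \ A, μ t j = -(∑ j ∈ A, μ t j) := by linarith
    rw [this, abs_neg]
  have h3 : 2 * |∑ j ∈ A, μ t j| ≤ 2 * δ ^ t := by
    rw [two_mul]
    nth_rewrite 2 [h2]
    exact le_trans h1 (hbound t)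
  have h4 : ∑ j ∈ A, νt t j - ∑ j ∈ A, πd j = ∑ j ∈ A, μ t j := by
    rw [← Finset.sum_sub_distrib]
  rw [h4]
  linarith
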